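/- Let l0, l1, l2 be positive real numbers and 0 < a1 < a2. Define x = e^{-(1+i)a1(l1+l0)/(l0 l1)}, y = e^{(1+i)a1(l0-l1)/(l0 l1)}, c1 = e^{(2+2i)a1/l1}, c2 = e^{(2+2i)a2/l1}, η1 = (l1-l0)(l1-l2), η2 = (l1+l0)(l1-l2), θ1 = (l1-l0)(l1+l2), θ2 = (l1+l0)(l1+l2). Then x(c1 η2 - c2 θ1) + y(-c1 η1 + c2 θ2) ≠ 0. -/

import Mathlib

open Complex

theorem two_jump_nondegeneracy (l0 l1 l2 a1 a2 : ℝ)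
    (hl0 : 0 < l0) (hl1 : 0 < l1) (hl2 : 0 < l2)
    (ha1 : 0 < a1) (ha12 : a1 < a2) :
    Complex.exp (-(1 + Complex.I) * a1 * (l1 + l0) / (l0 * l1))
        * (Complex.exp ((2 + 2 * Complex.I) * a1 / l1) * ((l1 + l0) * (l1 - l2))
            - Complex.exp ((2 + 2 * Complex.I) * a2 / l1) * ((l1 - l0) * (l1 + l2)))
      + Complex.exp ((1 + Complex.I) * a1 * (l0 - l1) / (l0 * l1))
        * (-(Complex.exp ((2 + 2 * Complex.I) * a1 / l1) * ((l1 - l0) * (l1 - l2)))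
            + Complex.exp ((2 + 2 * Complex.I) * a2 / l1) * ((l1 + l0) * (l1 + l2)))
      ≠ 0 := by
  have hl0' : (l0 : ℂ) ≠ 0 := by exact_mod_cast hl0.ne'
  have hl1' : (l1 : ℂ) ≠ 0 := by exact_mod_cast hl1.ne'
  set c1 : ℂ := Complex.exp ((2 + 2 * Complex.I) * a1 / l1) with hc1
  set c2 : ℂ := Complex.exp ((2 + 2 * Complex.I) * a2 / l1) with hc2
  set x : ℂ := Complex.exp (-(1 + Complex.I) * a1 * (l1 + l0) / (l0 * l1)) with hx
  have hy : Complex.exp ((1 + Complex.I) * ↑a1 * (↑l0 - ↑l1) / (↑l0 * ↑l1)) = x * c1 := by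
    rw [hx, hc1, ← Complex.exp_add]
    congr 1
    field_simp
    ring
  set A : ℂ := (↑l1 + ↑l0) - c1 * (↑l1 - ↑l0) with hA
  set B : ℂ := c1 * (↑l1 + ↑l0) - (↑l1 - ↑l0) with hB
  -- abs of c1, c2
  have hre1 : ((2 + 2 * Complex.I) * ↑a1 / ↑l1).re = 2 * a1 / l1 := by
    have : (2 + 2 * Complex.I) * (a1 : ℂ) / (l1 : ℂ)
        = ((2 * a1 / l1 : ℝ) : ℂ) + ((2 * a1 / l1 : ℝ) : ℂ) * Complex.I := by
      push_cast
      field_simp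
    rw [this]
    simp
  have hre2 : ((2 + 2 * Complex.I) * ↑a2 / ↑l1).re = 2 * a2 / l1 := by
    have : (2 + 2 * Complex.I) * (a2 : ℂ) / (l1 : ℂ)
        = ((2 * a2 / l1 : ℝ) : ℂ) + ((2 * a2 / l1 : ℝ) : ℂ) * Complex.I := by
      push_cast
      field_simp
    rw [this]
    simp
  have habs1 : ‖c1‖ = Real.exp (2 * a1 / l1) := by
    rw [hc1, Complex.norm_exp, hre1]
  have habs2 : ‖c2‖ = Real.exp (2 * a2 / l1) := by
    rw [hc2, Complex.norm_exp, hre2]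
  have hE1 : 1 < ‖c1‖ := by
    rw [habs1]
    calc (1:ℝ) = Real.exp 0 := Real.exp_zero.symm
      _ < _ := Real.exp_lt_exp.mpr (by positivity)
  have hE12 : ‖c1‖ < ‖c2‖ := by
    rw [habs1, habs2]
    apply Real.exp_lt_exp.mpr
    have := hl1
    gcongr
  -- |A| < |B|
  have hnormsq : 1 < Complex.normSq c1 := by
    have := Complex.sq_norm c1
    nlinarith [norm_nonneg c1]
  have habsAB : ‖A‖ < ‖B‖ := by
    rw [Complex.norm_def, Complex.norm_def]
    apply Real.sqrt_lt_sqrt (Complex.normSq_nonneg _)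
    have hAre : A.re = (l1 + l0) - c1.re * (l1 - l0) := by simp [hA]
    have hAim : A.im = -(c1.im * (l1 - l0)) := by simp [hA]
    have hBre : B.re = c1.re * (l1 + l0) - (l1 - l0) := by simp [hB]
    have hBim : B.im = c1.im * (l1 + l0) := by simp [hB]
    rw [Complex.normSq_apply, Complex.normSq_apply, hAre, hAim, hBre, hBim]
    have hns : Complex.normSq c1 = c1.re ^ 2 + c1.im ^ 2 := by
      rw [Complex.normSq_apply]; ring
    nlinarith [mul_pos hl0 hl1, hnormsq, hns]
  -- factor the expression
  rw [hy]
  have hfac : x * (c1 * ((↑l1 + ↑l0) * (↑l1 - ↑l2)) - c2 * ((↑l1 - ↑l0) * (↑l1 + ↑l2)))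
      + x * c1 * (-(c1 * ((↑l1 - ↑l0) * (↑l1 - ↑l2))) + c2 * ((↑l1 + ↑l0) * (↑l1 + ↑l2)))
      = x * (c1 * (↑l1 - ↑l2) * A + c2 * (↑l1 + ↑l2) * B) := by
    rw [hA, hB]; ring
  rw [hfac]
  apply mul_ne_zero (Complex.exp_ne_zero _)
  -- show the abs is positive
  have hterm1 : ‖c1 * (↑l1 - ↑l2) * A‖
      = ‖c1‖ * |l1 - l2| * ‖A‖ := by
    rw [norm_mul, norm_mul]
    congr 2
    rw [show ((l1 : ℂ) - l2) = ((l1 - l2 : ℝ) : ℂ) by push_cast; ring, Complex.norm_real, Real.norm_eq_abs]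
  have hterm2 : ‖c2 * (↑l1 + ↑l2) * B‖
      = ‖c2‖ * (l1 + l2) * ‖B‖ := by
    rw [norm_mul, norm_mul]
    congr 2
    rw [show ((l1 : ℂ) + l2) = ((l1 + l2 : ℝ) : ℂ) by push_cast; ring, Complex.norm_real, Real.norm_eq_abs,
      abs_of_pos (by linarith)]
  have hlt : ‖c1 * (↑l1 - ↑l2) * A‖ < ‖c2 * (↑l1 + ↑l2) * B‖ := by
    rw [hterm1, hterm2]
    have h1 : ‖c1‖ * |l1 - l2| < ‖c2‖ * (l1 + l2) := by
      apply mul_lt_mul'' hE12 (by rw [abs_lt]; constructor <;> linarith)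
        (by linarith) (abs_nonneg _)
    exact mul_lt_mul'' h1 habsAB (by positivity) (norm_nonneg _)
  intro hzero
  have h3 : ‖c2 * (↑l1 + ↑l2) * B‖
      ≤ ‖c1 * (↑l1 - ↑l2) * A‖ := by
    have : c2 * (↑l1 + ↑l2) * B = -(c1 * (↑l1 - ↑l2) * A) := by
      linear_combination hzero
    rw [this, norm_neg]
  linarith
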